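/- arXiv:2509.17045 — 3 statements merged into one kernel-verified Lean document; each statement's English description precedes it below -/
import Mathlib

section
/- The Vandermonde determinant Δ_N(x) = ∏_{1≤i<j≤N}(x_j − x_i) is an eigenfunction of the second-order differential operator ∑_{i=1}^N [x_i(1+x_i) ∂²/∂x_i² + ((2−2N−𝔰)x_i + (α+1)) ∂/∂x_i] with eigenvalue λ_𝔰^N = N(N−1)(−4N+2−3𝔰)/6; that is, applying the operator to Δ_N yields λ_𝔰^N · Δ_N. -/
open Finset


open scoped BigOperators

/-- Partial derivative of `f : (Fin N → ℝ) → ℝ` in the `i`-th coordinate. -/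
noncomputable def pderiv0 {N : ℕ} (i : Fin N) (f : (Fin N → ℝ) → ℝ) : (Fin N → ℝ) → ℝ :=
  fun x => deriv (fun t => f (Function.update x i t)) (x i)

/-- The Vandermonde determinant `Δ_N(x) = ∏_{i<j} (x_j - x_i)`. -/
noncomputable def Vand0 (N : ℕ) (x : Fin N → ℝ) : ℝ :=
  ∏ i : Fin N, ∏ j ∈ Finset.Ioi i, (x j - x i)

noncomputable def Cc {N : ℕ} (i : Fin N) (x : Fin N → ℝ) : ℝ :=
  (-1 : ℝ) ^ (Finset.Ioi i).card *
    ∏ k ∈ Finset.univ.erase i, ∏ l ∈ (Finset.Ioi k).erase i, (x l - x k)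

lemma vand_update {N : ℕ} (x : Fin N → ℝ) (i : Fin N) (t : ℝ) :
    Vand0 N (Function.update x i t) = Cc i x * ∏ j ∈ Finset.univ.erase i, (t - x j) := by
  set y := Function.update x i t with hy
  have hyi : y i = t := Function.update_self i t x
  have hyl : ∀ l, l ≠ i → y l = x l := fun l hl => Function.update_of_ne hl t x
  rw [Vand0, ← Finset.mul_prod_erase Finset.univ _ (Finset.mem_univ i)]
  have h1 : ∏ l ∈ Ioi i, (y l - y i) = (-1:ℝ)^(Ioi i).card * ∏ l ∈ Ioi i, (t - x l) := by
    rw [← Finset.prod_const (-1:ℝ), ← Finset.prod_mul_distrib]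
    refine Finset.prod_congr rfl fun l hl => ?_
    rw [hyi, hyl l (ne_of_gt (Finset.mem_Ioi.1 hl))]; ring
  have h2 : ∀ k ∈ Finset.univ.erase i, ∏ l ∈ Ioi k, (y l - y k)
      = (if k < i then (t - x k) else 1) * ∏ l ∈ (Ioi k).erase i, (x l - x k) := by
    intro k hk
    have hki : k ≠ i := Finset.ne_of_mem_erase hk
    have hyk : y k = x k := hyl k hki
    by_cases h : k < i
    · have hi : i ∈ Ioi k := Finset.mem_Ioi.2 h
      rw [← Finset.mul_prod_erase _ _ hi, if_pos h, hyi, hyk]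
      congr 1
      exact Finset.prod_congr rfl fun l hl =>
        by rw [hyl l (Finset.ne_of_mem_erase hl)]
    · have hi : i ∉ Ioi k := by simp [Finset.mem_Ioi, h]
      rw [Finset.erase_eq_of_notMem hi, if_neg h, one_mul, hyk]
      exact Finset.prod_congr rfl fun l hl =>
        by rw [hyl l (fun hne => hi (hne ▸ hl))]
  rw [Finset.prod_congr rfl h2, Finset.prod_mul_distrib]
  have h3 : ∏ k ∈ Finset.univ.erase i, (if k < i then (t - x k) else 1)
      = ∏ k ∈ Iio i, (t - x k) := by
    rw [Finset.prod_ite, Finset.prod_const_one, mul_one]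
    apply Finset.prod_congr _ fun _ _ => rfl
    ext k; simp [Finset.mem_filter, Finset.mem_Iio, Finset.mem_erase]
    intro h; exact ne_of_lt h
  have h4 : (∏ l ∈ Ioi i, (t - x l)) * ∏ k ∈ Iio i, (t - x k)
      = ∏ j ∈ Finset.univ.erase i, (t - x j) := by
    rw [← Finset.prod_disjUnion (Finset.disjoint_Ioi_Iio i)]
    apply Finset.prod_congr _ fun _ _ => rfl
    rw [Finset.Ioi_disjUnion_Iio]
    ext a; simp [eq_comm]
  rw [h1, h3, Cc]
  rw [← h4]
  ring

lemma hasDerivAt_prod_sub {ι : Type*} [DecidableEq ι] (S : Finset ι) (a : ι → ℝ) (t : ℝ) :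
    HasDerivAt (fun u => ∏ j ∈ S, (u - a j)) (∑ j ∈ S, ∏ k ∈ S.erase j, (t - a k)) t := by
  have h := HasDerivAt.fun_finsetProd (u := S) (f := fun j u => u - a j) (f' := fun _ => (1:ℝ))
    (x := t) (fun j _ => (hasDerivAt_id t).sub_const (a j))
  simpa using h

lemma deriv_vand {N : ℕ} (x : Fin N → ℝ) (i : Fin N) (t : ℝ) :
    deriv (fun u => Vand0 N (Function.update x i u)) t
      = Cc i x * ∑ j ∈ Finset.univ.erase i,
          ∏ k ∈ (Finset.univ.erase i).erase j, (t - x k) := by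
  have h : (fun u => Vand0 N (Function.update x i u))
      = fun u => Cc i x * ∏ j ∈ Finset.univ.erase i, (u - x j) :=
    funext (vand_update x i)
  rw [h]
  exact ((hasDerivAt_prod_sub _ x t).const_mul (Cc i x)).deriv

lemma pderiv1 {N : ℕ} (x : Fin N → ℝ) (i : Fin N) :
    pderiv0 i (Vand0 N) x
      = Cc i x * ∑ j ∈ Finset.univ.erase i,
          ∏ k ∈ (Finset.univ.erase i).erase j, (x i - x k) := by
  rw [pderiv0, deriv_vand]

lemma pderiv2 {N : ℕ} (x : Fin N → ℝ) (i : Fin N) :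
    pderiv0 i (pderiv0 i (Vand0 N)) x
      = Cc i x * ∑ j ∈ Finset.univ.erase i, ∑ k ∈ (Finset.univ.erase i).erase j,
          ∏ l ∈ ((Finset.univ.erase i).erase j).erase k, (x i - x l) := by
  rw [pderiv0]
  have h : (fun t => pderiv0 i (Vand0 N) (Function.update x i t))
      = fun t => Cc i x * ∑ j ∈ Finset.univ.erase i,
          ∏ k ∈ (Finset.univ.erase i).erase j, (t - x k) := by
    funext t
    rw [pderiv0]
    simp only [Function.update_idem, Function.update_self]
    exact deriv_vand x i t
  rw [h]
  have hd : HasDerivAt (fun t => Cc i x * ∑ j ∈ Finset.univ.erase i,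
          ∏ k ∈ (Finset.univ.erase i).erase j, (t - x k))
      (Cc i x * ∑ j ∈ Finset.univ.erase i, ∑ k ∈ (Finset.univ.erase i).erase j,
          ∏ l ∈ ((Finset.univ.erase i).erase j).erase k, (x i - x l)) (x i) := by
    apply HasDerivAt.const_mul
    exact HasDerivAt.fun_sum fun j _ => hasDerivAt_prod_sub _ x (x i)
  exact hd.deriv

lemma castNNN {N : ℕ} : ((N * (N-1) * (N-2) : ℕ) : ℝ) = (N:ℝ) * ((N:ℝ) - 1) * ((N:ℝ) - 2) := by
  match N with
  | 0 => simp
  | 1 => norm_num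
  | (n+2) =>
    push_cast [show n+2-1 = n+1 from rfl, show n+2-2 = n from rfl]
    ring

lemma swap_sum {N : ℕ} (g : Fin N → Fin N → ℝ) :
    ∑ i, ∑ j ∈ Finset.univ.erase i, g i j = ∑ i, ∑ j ∈ Finset.univ.erase i, g j i := by
  have h : ∀ (h : Fin N → Fin N → ℝ) (i : Fin N), ∑ j ∈ Finset.univ.erase i, h i j
      = ∑ j, if j ≠ i then h i j else 0 := by
    intro h i; rw [← Finset.filter_ne', Finset.sum_filter]
  rw [Finset.sum_congr rfl fun i (_ : i ∈ Finset.univ) => h g i,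
      Finset.sum_congr rfl fun i (_ : i ∈ Finset.univ) => h (fun a b => g b a) i,
      Finset.sum_comm]
  refine Finset.sum_congr rfl fun i _ => Finset.sum_congr rfl fun j _ => ?_
  by_cases hij : i = j
  · subst hij; simp
  · simp [hij, Ne.symm hij]

lemma castNN {N : ℕ} : ((N * (N-1) : ℕ) : ℝ) = (N:ℝ) * ((N:ℝ) - 1) := by
  cases N with
  | zero => simp
  | succ n => push_cast [Nat.succ_sub_one]; ring


lemma claimA {N : ℕ} (x : Fin N → ℝ) (hx : Function.Injective x) (a b : ℝ) :
    ∑ i, ∑ j ∈ Finset.univ.erase i, (a * x i + b) / (x i - x j)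
      = a * ((N:ℝ) * ((N:ℝ) - 1) / 2) := by
  have key : (2:ℝ) * (∑ i, ∑ j ∈ Finset.univ.erase i, (a * x i + b) / (x i - x j))
      = a * ((N:ℝ) * ((N:ℝ) - 1)) := by
    have h2 : (2:ℝ) * (∑ i, ∑ j ∈ Finset.univ.erase i, (a * x i + b) / (x i - x j))
        = (∑ i, ∑ j ∈ Finset.univ.erase i, (a * x i + b) / (x i - x j))
          + ∑ i, ∑ j ∈ Finset.univ.erase i, (a * x j + b) / (x j - x i) := by
      rw [← swap_sum]; ring
    rw [h2, ← Finset.sum_add_distrib]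
    have : ∀ i : Fin N, (∑ j ∈ Finset.univ.erase i, (a * x i + b) / (x i - x j))
        + ∑ j ∈ Finset.univ.erase i, (a * x j + b) / (x j - x i)
        = ∑ j ∈ Finset.univ.erase i, a := by
      intro i
      rw [← Finset.sum_add_distrib]
      refine Finset.sum_congr rfl fun j hj => ?_
      have hne : x i ≠ x j := fun hc => (Finset.ne_of_mem_erase hj) (hx hc.symm)
      have h1 : x i - x j ≠ 0 := sub_ne_zero.2 hne
      have h2 : x j - x i ≠ 0 := sub_ne_zero.2 hne.symm
      field_simp
      ring
    rw [Finset.sum_congr rfl fun i _ => this i]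
    simp only [Finset.sum_const, Finset.card_erase_of_mem, Finset.mem_univ,
      Finset.card_univ, nsmul_eq_mul, Fintype.card_fin]
    rw [← castNN, Nat.cast_mul]
    ring
  linarith

def T3 (N : ℕ) : Finset (Fin N × Fin N × Fin N) :=
  Finset.univ.filter fun p => p.1 ≠ p.2.1 ∧ p.1 ≠ p.2.2 ∧ p.2.1 ≠ p.2.2

lemma sum_T3 {N : ℕ} {M : Type*} [AddCommMonoid M] (f : Fin N → Fin N → Fin N → M) :
    ∑ p ∈ T3 N, f p.1 p.2.1 p.2.2
      = ∑ i, ∑ j ∈ Finset.univ.erase i, ∑ k ∈ (Finset.univ.erase i).erase j, f i j k := by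
  have h : ∀ (i : Fin N) (g : Fin N → M) (S : Finset (Fin N)),
      ∑ j ∈ S.erase i, g j = ∑ j ∈ S, if j ≠ i then g j else 0 := fun i g S => by
    rw [← Finset.filter_ne', Finset.sum_filter]
  rw [T3, Finset.sum_filter, Fintype.sum_prod_type]
  refine Finset.sum_congr rfl fun i _ => ?_
  rw [Fintype.sum_prod_type, h i _ Finset.univ]
  refine Finset.sum_congr rfl fun j _ => ?_
  by_cases hij : j = i
  · simp [hij]
  · rw [if_pos hij, h j _ (Finset.univ.erase i), h i _ Finset.univ]
    refine Finset.sum_congr rfl fun k _ => ?_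
    by_cases hki : k = i <;> by_cases hkj : k = j <;>
      simp [hki, hkj, hij, Ne.symm, eq_comm] <;> tauto

lemma cyc_T3 {N : ℕ} (F : Fin N × Fin N × Fin N → ℝ) :
    ∑ p ∈ T3 N, F p = ∑ p ∈ T3 N, F (p.2.1, p.2.2, p.1) := by
  refine Finset.sum_nbij' (fun p => (p.2.2, p.1, p.2.1)) (fun p => (p.2.1, p.2.2, p.1))
    ?_ ?_ ?_ ?_ ?_ <;> intro p hp <;> simp [T3] at hp ⊢ <;> tauto

lemma pt3 {X Y Z : ℝ} (h1 : X ≠ Y) (h2 : X ≠ Z) (h3 : Y ≠ Z) :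
    (X + X^2)/((X-Y)*(X-Z)) + (Y+Y^2)/((Y-Z)*(Y-X)) + (Z+Z^2)/((Z-X)*(Z-Y)) = 1 := by
  have d1 : X - Y ≠ 0 := sub_ne_zero.2 h1
  have d2 : X - Z ≠ 0 := sub_ne_zero.2 h2
  have d3 : Y - Z ≠ 0 := sub_ne_zero.2 h3
  have d4 : Y - X ≠ 0 := sub_ne_zero.2 h1.symm
  have d5 : Z - X ≠ 0 := sub_ne_zero.2 h2.symm
  have d6 : Z - Y ≠ 0 := sub_ne_zero.2 h3.symm
  field_simp
  ring

lemma cardT3 {N : ℕ} : ((T3 N).card : ℝ) = (N:ℝ) * ((N:ℝ) - 1) * ((N:ℝ) - 2) := by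
  have h : (T3 N).card = ∑ p ∈ T3 N, (1:ℕ) := (Finset.card_eq_sum_ones _)
  have h2 : ∑ p ∈ T3 N, (1:ℕ)
      = ∑ i : Fin N, ∑ j ∈ Finset.univ.erase i, ∑ k ∈ (Finset.univ.erase i).erase j, 1 :=
    sum_T3 (fun _ _ _ => 1)
  have h3 : ∑ i : Fin N, ∑ j ∈ Finset.univ.erase i, ∑ k ∈ (Finset.univ.erase i).erase j, 1
      = N * ((N-1) * (N-2)) := by
    have : ∀ i : Fin N, ∑ j ∈ Finset.univ.erase i, ∑ k ∈ (Finset.univ.erase i).erase j, 1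
        = (N-1) * (N-2) := by
      intro i
      have hc : ∀ j ∈ Finset.univ.erase i, ∑ k ∈ (Finset.univ.erase i).erase j, 1 = (N-2 : ℕ) := by
        intro j hj
        rw [Finset.sum_const, Finset.card_erase_of_mem hj, Finset.card_erase_of_mem (Finset.mem_univ _),
          Finset.card_univ, Fintype.card_fin, smul_eq_mul, mul_one]
        omega
      rw [Finset.sum_congr rfl hc, Finset.sum_const, Finset.card_erase_of_mem (Finset.mem_univ _),
        Finset.card_univ, Fintype.card_fin, smul_eq_mul]
    rw [Finset.sum_congr rfl fun i _ => this i, Finset.sum_const, Finset.card_univ,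
      Fintype.card_fin, smul_eq_mul]
  rw [h, h2, h3, ← mul_assoc, castNNN]


lemma claimB {N : ℕ} (x : Fin N → ℝ) (hx : Function.Injective x) :
    ∑ i, ∑ j ∈ Finset.univ.erase i, ∑ k ∈ (Finset.univ.erase i).erase j,
        (x i + (x i)^2) / ((x i - x j) * (x i - x k))
      = (N:ℝ) * ((N:ℝ) - 1) * ((N:ℝ) - 2) / 3 := by
  set g : Fin N → Fin N → Fin N → ℝ :=
    fun i j k => (x i + (x i)^2) / ((x i - x j) * (x i - x k)) with hg
  set S := ∑ i, ∑ j ∈ Finset.univ.erase i, ∑ k ∈ (Finset.univ.erase i).erase j, g i j k with hS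
  have e1 : S = ∑ p ∈ T3 N, g p.1 p.2.1 p.2.2 := (sum_T3 g).symm
  have e2 : S = ∑ p ∈ T3 N, g p.2.1 p.2.2 p.1 := by
    rw [e1, cyc_T3 (fun p => g p.1 p.2.1 p.2.2)]
  have e3 : S = ∑ p ∈ T3 N, g p.2.2 p.1 p.2.1 := by
    rw [e2, cyc_T3 (fun p => g p.2.1 p.2.2 p.1)]
  have key : 3 * S = (N:ℝ) * ((N:ℝ) - 1) * ((N:ℝ) - 2) := by
    have : 3 * S = ∑ p ∈ T3 N, (g p.1 p.2.1 p.2.2 + g p.2.1 p.2.2 p.1 + g p.2.2 p.1 p.2.1) := by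
      rw [Finset.sum_add_distrib, Finset.sum_add_distrib, ← e1, ← e2, ← e3]; ring
    rw [this, ← cardT3 (N := N), Finset.card_eq_sum_ones, Nat.cast_sum]
    apply Finset.sum_congr rfl
    intro p hp
    simp only [T3, Finset.mem_filter] at hp
    obtain ⟨-, h1, h2, h3⟩ := hp
    have hx1 : x p.1 ≠ x p.2.1 := fun h => h1 (hx h)
    have hx2 : x p.1 ≠ x p.2.2 := fun h => h2 (hx h)
    have hx3 : x p.2.1 ≠ x p.2.2 := fun h => h3 (hx h)
    simpa [hg] using pt3 hx1 hx2 hx3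
  linarith

lemma main_alg {N : ℕ} (x : Fin N → ℝ) (hx : Function.Injective x) (a b : ℝ) :
    ∑ i, (x i * (1 + x i) *
        (Cc i x * ∑ j ∈ Finset.univ.erase i, ∑ k ∈ (Finset.univ.erase i).erase j,
          ∏ l ∈ ((Finset.univ.erase i).erase j).erase k, (x i - x l))
      + (a * x i + b) *
        (Cc i x * ∑ j ∈ Finset.univ.erase i,
          ∏ k ∈ (Finset.univ.erase i).erase j, (x i - x k)))
    = ((N:ℝ) * ((N:ℝ) - 1) * ((N:ℝ) - 2) / 3 + a * ((N:ℝ) * ((N:ℝ) - 1) / 2)) * Vand0 N x := by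
  have hΔ : ∀ i : Fin N, Vand0 N x = Cc i x * ∏ j ∈ Finset.univ.erase i, (x i - x j) := by
    intro i
    have h := vand_update x i (x i)
    rwa [Function.update_eq_self] at h
  have hne : ∀ i j : Fin N, j ≠ i → x i - x j ≠ 0 :=
    fun i j h => sub_ne_zero.2 fun hc => h (hx hc.symm)
  have key1 : ∀ (i : Fin N), ∀ j ∈ Finset.univ.erase i,
      Cc i x * ∏ k ∈ (Finset.univ.erase i).erase j, (x i - x k)
        = Vand0 N x / (x i - x j) := by
    intro i j hj
    have hj' : j ≠ i := Finset.ne_of_mem_erase hj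
    have hsplit := Finset.mul_prod_erase (Finset.univ.erase i) (fun k => x i - x k) hj
    rw [eq_div_iff (hne i j hj'), hΔ i, ← hsplit]
    ring
  have key2 : ∀ (i : Fin N), ∀ j ∈ Finset.univ.erase i, ∀ k ∈ (Finset.univ.erase i).erase j,
      Cc i x * ∏ l ∈ ((Finset.univ.erase i).erase j).erase k, (x i - x l)
        = Vand0 N x / ((x i - x j) * (x i - x k)) := by
    intro i j hj k hk
    have hj' : j ≠ i := Finset.ne_of_mem_erase hj
    have hk' : k ≠ i := Finset.ne_of_mem_erase (Finset.mem_of_mem_erase hk)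
    have hsplit := Finset.mul_prod_erase (Finset.univ.erase i) (fun l => x i - x l) hj
    have hsplit2 := Finset.mul_prod_erase ((Finset.univ.erase i).erase j) (fun l => x i - x l) hk
    rw [eq_div_iff (mul_ne_zero (hne i j hj') (hne i k hk')), hΔ i, ← hsplit, ← hsplit2]
    ring
  have main : ∀ i : Fin N,
      x i * (1 + x i) *
        (Cc i x * ∑ j ∈ Finset.univ.erase i, ∑ k ∈ (Finset.univ.erase i).erase j,
          ∏ l ∈ ((Finset.univ.erase i).erase j).erase k, (x i - x l))
      + (a * x i + b) *
        (Cc i x * ∑ j ∈ Finset.univ.erase i,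
          ∏ k ∈ (Finset.univ.erase i).erase j, (x i - x k))
      = Vand0 N x *
        ((∑ j ∈ Finset.univ.erase i, ∑ k ∈ (Finset.univ.erase i).erase j,
            (x i + (x i)^2) / ((x i - x j) * (x i - x k)))
          + ∑ j ∈ Finset.univ.erase i, (a * x i + b) / (x i - x j)) := by
    intro i
    conv_rhs => rw [mul_add]
    simp only [Finset.mul_sum]
    congr 1
    · refine Finset.sum_congr rfl fun j hj => Finset.sum_congr rfl fun k hk => ?_
      rw [key2 i j hj k hk]
      ring
    · refine Finset.sum_congr rfl fun j hj => ?_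
      rw [key1 i j hj]
      ring
  rw [Finset.sum_congr rfl fun i _ => main i, ← Finset.mul_sum, Finset.sum_add_distrib,
    claimB x hx, claimA x hx a b]
  ring

noncomputable def S1 {N : ℕ} (i : Fin N) (x : Fin N → ℝ) : ℝ :=
  ∑ j ∈ Finset.univ.erase i, ∏ k ∈ (Finset.univ.erase i).erase j, (x i - x k)

noncomputable def S2 {N : ℕ} (i : Fin N) (x : Fin N → ℝ) : ℝ :=
  ∑ j ∈ Finset.univ.erase i, ∑ k ∈ (Finset.univ.erase i).erase j,
    ∏ l ∈ ((Finset.univ.erase i).erase j).erase k, (x i - x l)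

noncomputable def FF (N : ℕ) (a b : ℝ) (x : Fin N → ℝ) : ℝ :=
  ∑ i, (x i * (1 + x i) * (Cc i x * S2 i x) + (a * x i + b) * (Cc i x * S1 i x))

lemma contV {N : ℕ} : Continuous (Vand0 N) := by
  unfold Vand0
  exact continuous_finset_prod _ fun i _ => continuous_finset_prod _ fun j _ =>
    (continuous_apply j).sub (continuous_apply i)

lemma contFF (N : ℕ) (a b : ℝ) : Continuous (FF N a b) := by
  unfold FF S1 S2 Cc
  refine continuous_finset_sum _ fun i _ => ?_
  have hC : Continuous fun x : Fin N → ℝ => (-1:ℝ) ^ (Finset.Ioi i).card *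
      ∏ k ∈ Finset.univ.erase i, ∏ l ∈ (Finset.Ioi k).erase i, (x l - x k) :=
    continuous_const.mul (continuous_finset_prod _ fun k _ => continuous_finset_prod _ fun l _ =>
      (continuous_apply l).sub (continuous_apply k))
  have hS1 : Continuous fun x : Fin N → ℝ =>
      ∑ j ∈ Finset.univ.erase i, ∏ k ∈ (Finset.univ.erase i).erase j, (x i - x k) :=
    continuous_finset_sum _ fun j _ => continuous_finset_prod _ fun k _ =>
      (continuous_apply i).sub (continuous_apply k)
  have hS2 : Continuous fun x : Fin N → ℝ =>
      ∑ j ∈ Finset.univ.erase i, ∑ k ∈ (Finset.univ.erase i).erase j,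
        ∏ l ∈ ((Finset.univ.erase i).erase j).erase k, (x i - x l) :=
    continuous_finset_sum _ fun j _ => continuous_finset_sum _ fun k _ =>
      continuous_finset_prod _ fun l _ => (continuous_apply i).sub (continuous_apply l)
  exact (((continuous_apply i).mul (continuous_const.add (continuous_apply i))).mul
      (hC.mul hS2)).add
    (((continuous_const.mul (continuous_apply i)).add continuous_const).mul (hC.mul hS1))

lemma FF_eq {N : ℕ} (a b : ℝ) (x : Fin N → ℝ) (hx : Function.Injective x) :
    FF N a b x
      = ((N:ℝ) * ((N:ℝ) - 1) * ((N:ℝ) - 2) / 3 + a * ((N:ℝ) * ((N:ℝ) - 1) / 2)) * Vand0 N x := by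
  unfold FF S1 S2
  exact main_alg x hx a b

lemma FF_eq_all {N : ℕ} (a b : ℝ) (x : Fin N → ℝ) :
    FF N a b x
      = ((N:ℝ) * ((N:ℝ) - 1) * ((N:ℝ) - 2) / 3 + a * ((N:ℝ) * ((N:ℝ) - 1) / 2)) * Vand0 N x := by
  set c : ℝ := (N:ℝ) * ((N:ℝ) - 1) * ((N:ℝ) - 2) / 3 + a * ((N:ℝ) * ((N:ℝ) - 1) / 2) with hc
  set y : ℝ → (Fin N → ℝ) := fun t j => x j + t * ((j : ℕ) : ℝ) with hy
  have hycont : Continuous y := continuous_pi fun j =>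
    continuous_const.add (continuous_id.mul continuous_const)
  set g : ℝ → ℝ := fun t => FF N a b (y t) - c * Vand0 N (y t) with hgdef
  have hg : Continuous g :=
    ((contFF N a b).comp hycont).sub (continuous_const.mul (contV.comp hycont))
  set Bad : Set ℝ :=
    Set.range (fun p : Fin N × Fin N => (x p.2 - x p.1) / (((p.1 : ℕ) : ℝ) - ((p.2 : ℕ) : ℝ)))
    with hBad
  have hzero : ∀ t ∉ Bad, g t = 0 := by
    intro t ht
    have hinj : Function.Injective (y t) := by
      intro i j hij
      by_contra hne
      apply ht
      refine ⟨(i, j), ?_⟩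
      have hvne : ((i : ℕ) : ℝ) ≠ ((j : ℕ) : ℝ) := by
        exact_mod_cast fun h => hne (Fin.ext h)
      have hij' : x i + t * ((i : ℕ) : ℝ) = x j + t * ((j : ℕ) : ℝ) := hij
      rw [div_eq_iff (sub_ne_zero.2 hvne)]
      linear_combination -hij'
    simp only [hgdef]
    rw [FF_eq a b (y t) hinj, ← hc, sub_self]
  have hfin : Bad.Finite := Set.finite_range _
  have hdense : Dense Badᶜ := hfin.countable.dense_compl ℝ
  have hcl : IsClosed {t : ℝ | g t = 0} := isClosed_eq hg continuous_const
  have hall : ∀ t, g t = 0 := by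
    intro t
    have h1 : Badᶜ ⊆ {t : ℝ | g t = 0} := fun u hu => hzero u hu
    have h2 : closure Badᶜ ⊆ {t : ℝ | g t = 0} := hcl.closure_subset_iff.2 h1
    have h3 : (Set.univ : Set ℝ) ⊆ {t : ℝ | g t = 0} := by
      rw [← hdense.closure_eq]; exact h2
    exact h3 (Set.mem_univ t)
  have h0 := hall 0
  have hy0 : y 0 = x := by funext j; simp [hy]
  have h0' : FF N a b (y 0) - c * Vand0 N (y 0) = 0 := h0
  rw [hy0] at h0'
  linarith

theorem stmt0 (N : ℕ) (s α : ℝ) (hα : -1 < α) (x : Fin N → ℝ) :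
    (∑ i : Fin N,
      (x i * (1 + x i) * pderiv0 i (pderiv0 i (Vand0 N)) x
        + ((2 - 2 * (N : ℝ) - s) * x i + (α + 1)) * pderiv0 i (Vand0 N) x))
    = ((N : ℝ) * ((N : ℝ) - 1) * (-4 * (N : ℝ) + 2 - 3 * s) / 6) * Vand0 N x := by
  have h1 : (∑ i : Fin N,
      (x i * (1 + x i) * pderiv0 i (pderiv0 i (Vand0 N)) x
        + ((2 - 2 * (N : ℝ) - s) * x i + (α + 1)) * pderiv0 i (Vand0 N) x))
      = FF N (2 - 2 * (N : ℝ) - s) (α + 1) x := by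
    unfold FF S1 S2
    refine Finset.sum_congr rfl fun i _ => ?_
    rw [pderiv1, pderiv2]
  rw [h1, FF_eq_all]
  ring
end

section
/- For α > −1 and x ∈ ℝ^N with 0 < x_1 < ⋯ < x_N, the measure Λ_{α,N}^N(x, dy) = (α+1)_N (∏_{k=1}^N y_k^α / x_k^{α+1}) (Δ_N(y)/Δ_N(x)) 1_{W_{≥}^{N,N}(x)}(y) dy is a probability measure, i.e. its total mass equals 1. -/
open scoped BigOperators
open MeasureTheory

noncomputable def Vand9 {n : ℕ} (v : Fin n → ℝ) : ℝ :=
  ∏ i : Fin n, ∏ j ∈ Finset.Ioi i, (v j - v i)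

noncomputable def poch9 (a : ℝ) (n : ℕ) : ℝ := ∏ k ∈ Finset.range n, (a + k)

/-- `W_{≥}^{N,N}(x) = {y : 0 ≤ y_1 ≤ x_1 ≤ y_2 ≤ ⋯ ≤ y_N ≤ x_N}`. -/
def W29 {N : ℕ} (x : Fin N → ℝ) : Set (Fin N → ℝ) :=
  {y | (∀ k : Fin N, 0 ≤ y k ∧ y k ≤ x k) ∧
    ∀ (k : Fin N) (h : (k : ℕ) + 1 < N), x k ≤ y ⟨(k : ℕ) + 1, h⟩}

namespace Stmt9Aux

lemma onedim {r a b : ℝ} (hr : -1 < r) (hab : a ≤ b) :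
    ∫ t : ℝ, Set.indicator (Set.Icc a b) (fun t => t ^ r) t =
      (b ^ (r + 1) - a ^ (r + 1)) / (r + 1) := by
  rw [MeasureTheory.integral_indicator measurableSet_Icc,
    MeasureTheory.integral_Icc_eq_integral_Ioc,
    ← intervalIntegral.integral_of_le hab]
  exact integral_rpow (Or.inl hr)

lemma onedim_int {r a b : ℝ} (hr : -1 < r) :
    Integrable (Set.indicator (Set.Icc a b) (fun t : ℝ => t ^ r)) := by
  rw [integrable_indicator_iff measurableSet_Icc]
  exact (intervalIntegral.intervalIntegrable_rpow' hr (a := a) (b := b)).1.congr_set_ae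
    (MeasureTheory.Ioc_ae_eq_Icc).symm

lemma indicator_pi_prod {N : ℕ} (t : Fin N → Set ℝ) (f : Fin N → ℝ → ℝ) (y : Fin N → ℝ) :
    Set.indicator (Set.univ.pi t) (fun y => ∏ k, f k (y k)) y
      = ∏ k, Set.indicator (t k) (f k) (y k) := by
  by_cases h : y ∈ Set.univ.pi t
  · rw [Set.indicator_of_mem h]
    exact Finset.prod_congr rfl fun k _ =>
      (Set.indicator_of_mem (h k trivial) _).symm
  · rw [Set.indicator_of_notMem h]
    obtain ⟨k, hk⟩ : ∃ k, y k ∉ t k := by simpa [Set.mem_pi] using h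
    exact (Finset.prod_eq_zero (Finset.mem_univ k) (Set.indicator_of_notMem hk _)).symm

def lo9 {N : ℕ} (x : Fin N → ℝ) (k : Fin N) : ℝ :=
  if _h : (k : ℕ) = 0 then 0
  else x ⟨(k : ℕ) - 1, Nat.lt_of_le_of_lt (Nat.sub_le _ _) k.isLt⟩

variable {N : ℕ} {α : ℝ} {x : Fin N → ℝ}

lemma det_M (hα : -1 < α) (hx0 : ∀ k, 0 < x k) :
    Matrix.det (Matrix.of fun j k : Fin N =>
        ((x k) ^ (α + (j : ℕ) + 1) - (lo9 x k) ^ (α + (j : ℕ) + 1)) / (α + (j : ℕ) + 1))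
      = (∏ j : Fin N, (α + (j : ℕ) + 1))⁻¹ *
          ((∏ k : Fin N, x k ^ (α + 1)) * Vand9 x) := by
  have hp : ∀ j : Fin N, (0 : ℝ) < α + (j : ℕ) + 1 := by
    intro j
    have : (0 : ℝ) ≤ (j : ℕ) := Nat.cast_nonneg _
    linarith
  set U : Matrix (Fin N) (Fin N) ℝ :=
    Matrix.of fun l k : Fin N => if l = k then (1 : ℝ)
      else if (l : ℕ) + 1 = (k : ℕ) then -1 else 0 with hU
  set G : Matrix (Fin N) (Fin N) ℝ :=
    Matrix.of fun j k : Fin N => (x k) ^ (α + (j : ℕ) + 1) / (α + (j : ℕ) + 1) with hG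
  have hMGU : (Matrix.of fun j k : Fin N =>
      ((x k) ^ (α + (j : ℕ) + 1) - (lo9 x k) ^ (α + (j : ℕ) + 1)) / (α + (j : ℕ) + 1))
      = G * U := by
    ext j k
    rw [Matrix.mul_apply]
    simp only [hG, hU, Matrix.of_apply]
    have hsplit : ∀ l : Fin N,
        (x l) ^ (α + (j : ℕ) + 1) / (α + (j : ℕ) + 1) *
          (if l = k then (1 : ℝ) else if (l : ℕ) + 1 = (k : ℕ) then -1 else 0)
        = (if l = k then (x l) ^ (α + (j : ℕ) + 1) / (α + (j : ℕ) + 1) else 0)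
          + (if (l : ℕ) + 1 = (k : ℕ) then
              -((x l) ^ (α + (j : ℕ) + 1) / (α + (j : ℕ) + 1)) else 0) := by
      intro l
      by_cases h1 : l = k
      · have h2 : ¬ ((l : ℕ) + 1 = (k : ℕ)) := by subst h1; omega
        simp [h1, h2]
      · by_cases h2 : (l : ℕ) + 1 = (k : ℕ) <;> simp [h1, h2]
    rw [Finset.sum_congr rfl (fun l _ => hsplit l), Finset.sum_add_distrib,
      Finset.sum_ite_eq' Finset.univ k, if_pos (Finset.mem_univ k)]
    by_cases hk0 : (k : ℕ) = 0
    · have h2 : ∀ l : Fin N, ¬ ((l : ℕ) + 1 = (k : ℕ)) := by intro l; omega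
      rw [Finset.sum_congr rfl (fun l _ => if_neg (h2 l)), Finset.sum_const_zero]
      have : lo9 x k = 0 := dif_pos hk0
      rw [this, Real.zero_rpow (by have := hp j; linarith)]
      ring
    · set k' : Fin N := ⟨(k : ℕ) - 1, Nat.lt_of_le_of_lt (Nat.sub_le _ _) k.isLt⟩ with hk'
      have hcond : ∀ l : Fin N, ((l : ℕ) + 1 = (k : ℕ)) ↔ l = k' := by
        intro l
        rw [Fin.ext_iff]
        simp only [hk']
        omega
      have : ∀ l : Fin N,
          (if (l : ℕ) + 1 = (k : ℕ) then
            -((x l) ^ (α + (j : ℕ) + 1) / (α + (j : ℕ) + 1)) else 0)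
          = (if l = k' then -((x l) ^ (α + (j : ℕ) + 1) / (α + (j : ℕ) + 1)) else 0) := by
        intro l; simp only [hcond l]
      rw [Finset.sum_congr rfl (fun l _ => this l),
        Finset.sum_ite_eq' Finset.univ k', if_pos (Finset.mem_univ k')]
      have hlo : lo9 x k = x k' := dif_neg hk0
      rw [hlo]; ring
  have hUtri : U.BlockTriangular id := by
    intro i j hij
    have h1 : ¬ (i = j) := by intro h; subst h; exact lt_irrefl _ hij
    have h2 : ¬ ((i : ℕ) + 1 = (j : ℕ)) := by
      have : (j : ℕ) < (i : ℕ) := hij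
      omega
    simp [hU, h1, h2]
  have hdetU : U.det = 1 := by
    rw [Matrix.det_of_upperTriangular hUtri]
    simp [hU]
  have hGfact : ∀ j k : Fin N,
      (x k) ^ (α + (j : ℕ) + 1) / (α + (j : ℕ) + 1)
      = (α + (j : ℕ) + 1)⁻¹ * ((x k) ^ (α + 1) * (x k) ^ (j : ℕ)) := by
    intro j k
    rw [div_eq_inv_mul]
    congr 1
    rw [show α + (j : ℕ) + 1 = (α + 1) + (j : ℕ) by ring,
      Real.rpow_add (hx0 k), Real.rpow_natCast]
  have hdetG : G.det = (∏ j : Fin N, (α + (j : ℕ) + 1))⁻¹ *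
      ((∏ k : Fin N, x k ^ (α + 1)) * Vand9 x) := by
    set B : Matrix (Fin N) (Fin N) ℝ := Matrix.transpose (Matrix.vandermonde x) with hB
    have h1 : G = Matrix.of fun j k : Fin N => (α + (j : ℕ) + 1)⁻¹ *
        ((Matrix.of fun j k : Fin N => (x k) ^ (α + 1) * (B j k)) j k) := by
      ext j k
      simp only [hG, hB, Matrix.of_apply, Matrix.transpose_apply, Matrix.vandermonde_apply]
      exact hGfact j k
    rw [h1, Matrix.det_mul_column, Matrix.det_mul_row, hB, Matrix.det_transpose,
      Matrix.det_vandermonde, ← Finset.prod_inv_distrib]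
    rw [Vand9]
  rw [hMGU, Matrix.det_mul, hdetU, mul_one, hdetG]

end Stmt9Aux

/-- `Λ_{α,N}^N(x,·)` is a probability measure: its total mass equals 1. -/
theorem stmt9 (N : ℕ) (α : ℝ) (hα : -1 < α) (x : Fin N → ℝ)
    (hx0 : ∀ k, 0 < x k) (hx : StrictMono x) :
    (∫ y : Fin N → ℝ,
      Set.indicator (W29 x)
        (fun y => poch9 (α + 1) N * (∏ k : Fin N, y k ^ α / x k ^ (α + 1)) *
          Vand9 y / Vand9 x) y) = 1 := by
  classical
  set lo : Fin N → ℝ := Stmt9Aux.lo9 x with hlo_def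
  have hlo0 : ∀ k, 0 ≤ lo k := by
    intro k
    by_cases hk : (k : ℕ) = 0
    · rw [hlo_def]; rw [show Stmt9Aux.lo9 x k = 0 from dif_pos hk]
    · rw [hlo_def, show Stmt9Aux.lo9 x k = x ⟨(k : ℕ) - 1, _⟩ from dif_neg hk]
      exact (hx0 _).le
  have hab : ∀ k, lo k ≤ x k := by
    intro k
    by_cases hk : (k : ℕ) = 0
    · rw [hlo_def, show Stmt9Aux.lo9 x k = 0 from dif_pos hk]; exact (hx0 k).le
    · rw [hlo_def, show Stmt9Aux.lo9 x k = x ⟨(k : ℕ) - 1, _⟩ from dif_neg hk]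
      exact (hx (show (⟨(k : ℕ) - 1, _⟩ : Fin N) < k from
        Nat.sub_lt (Nat.pos_of_ne_zero hk) one_pos)).le
  set S : Set (Fin N → ℝ) := Set.univ.pi (fun k => Set.Icc (lo k) (x k)) with hS_def
  have hW : W29 x = S := by
    ext y
    constructor
    · rintro ⟨h1, h2⟩ k -
      refine ⟨?_, (h1 k).2⟩
      by_cases hk : (k : ℕ) = 0
      · rw [hlo_def, show Stmt9Aux.lo9 x k = 0 from dif_pos hk]; exact (h1 k).1
      · have hlt : (k : ℕ) - 1 + 1 < N := by omega
        have h3 := h2 ⟨(k : ℕ) - 1, Nat.lt_of_le_of_lt (Nat.sub_le _ _) k.isLt⟩ hlt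
        have hkk : (⟨(k : ℕ) - 1 + 1, hlt⟩ : Fin N) = k := Fin.ext (by simp; omega)
        rw [hkk] at h3
        rw [hlo_def, show Stmt9Aux.lo9 x k = x ⟨(k : ℕ) - 1, _⟩ from dif_neg hk]
        exact h3
    · intro hy
      refine ⟨fun k => ⟨le_trans (hlo0 k) (hy k trivial).1, (hy k trivial).2⟩,
        fun k h => ?_⟩
      have h3 := (hy ⟨(k : ℕ) + 1, h⟩ trivial).1
      have : lo ⟨(k : ℕ) + 1, h⟩ = x k := by
        rw [hlo_def, show Stmt9Aux.lo9 x ⟨(k : ℕ) + 1, h⟩ = x ⟨(k : ℕ) + 1 - 1, _⟩ from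
          dif_neg (by simp)]
        congr 1
      exact le_trans (le_of_eq this.symm) h3
  set F : (Fin N → ℝ) → ℝ := fun y => (∏ k, y k ^ α) * Vand9 y with hF_def
  set C : ℝ := poch9 (α + 1) N / ((∏ k : Fin N, x k ^ (α + 1)) * Vand9 x) with hC_def
  have hsplit : (fun y : Fin N → ℝ => poch9 (α + 1) N *
      (∏ k : Fin N, y k ^ α / x k ^ (α + 1)) * Vand9 y / Vand9 x) = fun y => C * F y := by
    funext y
    rw [Finset.prod_div_distrib]
    simp only [hC_def, hF_def, div_eq_mul_inv, mul_inv]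
    ring
  have hstep1 : ∀ y : Fin N → ℝ,
      Set.indicator (W29 x) (fun y => poch9 (α + 1) N *
        (∏ k : Fin N, y k ^ α / x k ^ (α + 1)) * Vand9 y / Vand9 x) y
      = C * Set.indicator S F y := by
    intro y
    rw [hW, hsplit, Set.indicator_const_mul]
  simp only [hstep1]
  rw [MeasureTheory.integral_const_mul]
  have hexp : ∀ j : Fin N, (-1 : ℝ) < α + (j : ℕ) := by
    intro j
    have : (0 : ℝ) ≤ ((j : ℕ) : ℝ) := Nat.cast_nonneg _
    linarith
  set e : Fin N → ℝ → ℝ := fun j t => t ^ (α + (j : ℕ)) with he_def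
  set Gf : Equiv.Perm (Fin N) → (Fin N → ℝ) → ℝ :=
    fun σ y => ((Equiv.Perm.sign σ : ℤ) : ℝ) * ∏ k, e (σ⁻¹ k) (y k) with hGf_def
  set M : Matrix (Fin N) (Fin N) ℝ := Matrix.of fun j k : Fin N =>
    ((x k) ^ (α + (j : ℕ) + 1) - (lo k) ^ (α + (j : ℕ) + 1)) / (α + (j : ℕ) + 1) with hM_def
  have hae : ∀ᵐ y : (Fin N → ℝ), ∀ k, y k ≠ 0 := by
    rw [MeasureTheory.ae_all_iff]
    intro k
    have h0 : (volume : Measure (Fin N → ℝ)) {y | y k = 0} = 0 := by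
      rw [MeasureTheory.volume_pi]
      exact MeasureTheory.Measure.pi_hyperplane _ k 0
    rw [MeasureTheory.ae_iff]
    simpa using h0
  have haeF : (fun y => Set.indicator S F y) =ᵐ[volume]
      (fun y => ∑ σ : Equiv.Perm (Fin N), Set.indicator S (Gf σ) y) := by
    filter_upwards [hae] with y hy
    by_cases hyS : y ∈ S
    · rw [Set.indicator_of_mem hyS,
        Finset.sum_congr rfl (fun σ _ => Set.indicator_of_mem hyS (Gf σ))]
      have hpos : ∀ k, 0 < y k :=
        fun k => lt_of_le_of_ne (le_trans (hlo0 k) (hyS k trivial).1) (Ne.symm (hy k))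
      simp only [hF_def]
      rw [show Vand9 y = (Matrix.vandermonde y).det from (Matrix.det_vandermonde y).symm,
        Matrix.det_apply, Finset.mul_sum]
      refine Finset.sum_congr rfl fun σ _ => ?_
      simp only [hGf_def]
      have hre : ∏ k : Fin N, e (σ⁻¹ k) (y k) = ∏ i : Fin N, e i (y (σ i)) := by
        rw [← Equiv.prod_comp σ (fun k => e (σ⁻¹ k) (y k))]
        exact Finset.prod_congr rfl fun i _ => by simp
      have hterm : ∀ i : Fin N, e i (y (σ i)) = (y (σ i)) ^ α * (y (σ i)) ^ (i : ℕ) := by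
        intro i
        rw [he_def]
        simp only
        rw [Real.rpow_add (hpos _), Real.rpow_natCast]
      rw [hre, Finset.prod_congr rfl (fun i _ => hterm i), Finset.prod_mul_distrib,
        Equiv.prod_comp σ (fun k => y k ^ α)]
      simp only [Matrix.vandermonde_apply, Units.smul_def, zsmul_eq_mul]
      ring
    · rw [Set.indicator_of_notMem hyS,
        Finset.sum_congr rfl (fun σ _ => Set.indicator_of_notMem hyS (Gf σ)),
        Finset.sum_const_zero]
  have hrepr : ∀ σ : Equiv.Perm (Fin N), Set.indicator S (Gf σ)
      = fun y => ((Equiv.Perm.sign σ : ℤ) : ℝ) *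
          ∏ k, Set.indicator (Set.Icc (lo k) (x k)) (e (σ⁻¹ k)) (y k) := by
    intro σ
    funext y
    simp only [hGf_def]
    rw [Set.indicator_const_mul]
    congr 1
    rw [hS_def]
    exact Stmt9Aux.indicator_pi_prod _ _ y
  have hint : ∀ σ : Equiv.Perm (Fin N), Integrable (Set.indicator S (Gf σ)) := by
    intro σ
    rw [hrepr σ]
    exact (MeasureTheory.Integrable.fintype_prod
      (f := fun k => Set.indicator (Set.Icc (lo k) (x k)) (e (σ⁻¹ k)))
      (fun k => Stmt9Aux.onedim_int (hexp _))).const_mul _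
  have hval : ∀ σ : Equiv.Perm (Fin N),
      ∫ y : Fin N → ℝ, Set.indicator S (Gf σ) y
      = ((Equiv.Perm.sign σ : ℤ) : ℝ) * ∏ k : Fin N, M (σ⁻¹ k) k := by
    intro σ
    rw [hrepr σ, MeasureTheory.integral_const_mul,
      MeasureTheory.integral_fintype_prod_volume_eq_prod (ι := Fin N)
        (f := fun k t => Set.indicator (Set.Icc (lo k) (x k)) (e (σ⁻¹ k)) t)]
    congr 1
    refine Finset.prod_congr rfl fun k _ => ?_
    exact Stmt9Aux.onedim (hexp (σ⁻¹ k)) (hab k)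
  have key : (∫ y : Fin N → ℝ, Set.indicator S F y)
      = (∏ k : Fin N, x k ^ (α + 1)) * Vand9 x / poch9 (α + 1) N := by
    calc (∫ y : Fin N → ℝ, Set.indicator S F y)
        = ∫ y : Fin N → ℝ, ∑ σ : Equiv.Perm (Fin N), Set.indicator S (Gf σ) y :=
          MeasureTheory.integral_congr_ae haeF
      _ = ∑ σ : Equiv.Perm (Fin N), ∫ y : Fin N → ℝ, Set.indicator S (Gf σ) y :=
          MeasureTheory.integral_finset_sum _ (fun σ _ => hint σ)
      _ = ∑ σ : Equiv.Perm (Fin N),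
            ((Equiv.Perm.sign σ : ℤ) : ℝ) * ∏ k : Fin N, M (σ⁻¹ k) k :=
          Finset.sum_congr rfl fun σ _ => hval σ
      _ = M.det := by
          rw [Matrix.det_apply,
            ← Equiv.sum_comp (Equiv.inv (Equiv.Perm (Fin N)))
              (fun σ => Equiv.Perm.sign σ • ∏ i, M (σ i) i)]
          refine Finset.sum_congr rfl fun σ _ => ?_
          simp [Equiv.inv_apply, Equiv.Perm.sign_inv, Units.smul_def, zsmul_eq_mul]
      _ = (∏ j : Fin N, (α + (j : ℕ) + 1))⁻¹ *
            ((∏ k : Fin N, x k ^ (α + 1)) * Vand9 x) := by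
          rw [hM_def, hlo_def]
          exact Stmt9Aux.det_M hα hx0
      _ = (∏ k : Fin N, x k ^ (α + 1)) * Vand9 x / poch9 (α + 1) N := by
          have hpoch_eq : poch9 (α + 1) N = ∏ j : Fin N, (α + (j : ℕ) + 1) := by
            rw [poch9, ← Fin.prod_univ_eq_prod_range (fun k => (α + 1) + (k : ℕ)) N]
            exact Finset.prod_congr rfl fun j _ => by ring
          rw [hpoch_eq, div_eq_mul_inv, mul_comm]
  rw [key]
  have hpoch : 0 < poch9 (α + 1) N := by
    refine Finset.prod_pos fun k _ => ?_
    have : (0 : ℝ) ≤ ((k : ℕ) : ℝ) := Nat.cast_nonneg _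
    linarith
  have hB : 0 < ∏ k : Fin N, x k ^ (α + 1) :=
    Finset.prod_pos fun k _ => Real.rpow_pos_of_pos (hx0 k) _
  have hV : 0 < Vand9 x :=
    Finset.prod_pos fun i _ => Finset.prod_pos fun j hj =>
      sub_pos.2 (hx (Finset.mem_Ioi.1 hj))
  rw [hC_def]
  field_simp
end

section
/- For x ∈ ℝ^{N+1} with x_1 < ⋯ < x_{N+1}, the total mass of the measure L_N^{N+1}(x, dy) = N! (Δ_N(y)/Δ_{N+1}(x)) 1_{W^{N,N+1}(x)}(y) dy on ℝ^N equals 1; i.e. ∫_{x_1 ≤ y_1 ≤ x_2 ≤ ⋯ ≤ y_N ≤ x_{N+1}} Δ_N(y) dy = Δ_{N+1}(x)/N!. -/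
open scoped BigOperators
open MeasureTheory

noncomputable def Vand10 {n : ℕ} (v : Fin n → ℝ) : ℝ :=
  ∏ i : Fin n, ∏ j ∈ Finset.Ioi i, (v j - v i)

/-- `W^{N,N+1}(x) = {y : x_1 ≤ y_1 ≤ x_2 ≤ ⋯ ≤ y_N ≤ x_{N+1}}`. -/
def W110 {N : ℕ} (x : Fin (N + 1) → ℝ) : Set (Fin N → ℝ) :=
  {y | ∀ k : Fin N, x k.castSucc ≤ y k ∧ y k ≤ x k.succ}

namespace Stmt10Aux

lemma indicator_pi_prod {N : ℕ} (s : Fin N → Set ℝ) (f : Fin N → ℝ → ℝ) (y : Fin N → ℝ) :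
    Set.indicator (Set.univ.pi s) (fun y => ∏ i, f i (y i)) y
      = ∏ i, Set.indicator (s i) (f i) (y i) := by
  by_cases h : y ∈ Set.univ.pi s
  · rw [Set.indicator_of_mem h]
    exact Finset.prod_congr rfl fun i _ =>
      (Set.indicator_of_mem (h i (Set.mem_univ i)) _).symm
  · rw [Set.indicator_of_notMem h]
    rw [Set.mem_pi] at h
    push_neg at h
    obtain ⟨i, -, hi⟩ := h
    exact (Finset.prod_eq_zero (Finset.mem_univ i)
      (Set.indicator_of_notMem hi _)).symm

lemma integral_indicator_pow (a b : ℝ) (hab : a ≤ b) (e : ℕ) :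
    ∫ t : ℝ, Set.indicator (Set.Icc a b) (fun t => t ^ e) t
      = (b ^ (e + 1) - a ^ (e + 1)) / (e + 1) := by
  rw [integral_indicator measurableSet_Icc, MeasureTheory.integral_Icc_eq_integral_Ioc,
    ← intervalIntegral.integral_of_le hab, integral_pow]

/-- Vandermonde expanded as a sum over permutations with monomials in the coordinates. -/
lemma vand_eq_sum {n : ℕ} (y : Fin n → ℝ) :
    Vand10 y = ∑ σ : Equiv.Perm (Fin n),
      ((Equiv.Perm.sign σ : ℤ) : ℝ) * ∏ i, y i ^ ((σ i : Fin n) : ℕ) := by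
  have h := Matrix.det_vandermonde y
  rw [Vand10, ← h, ← Matrix.det_transpose (Matrix.vandermonde y), Matrix.det_apply]
  simp [Matrix.vandermonde, Units.smul_def, zsmul_eq_mul, Matrix.transpose_apply]

/-- The key determinant identity via column operations. -/
lemma det_diff (N : ℕ) (x : Fin (N + 1) → ℝ) :
    (Matrix.of fun e i : Fin N =>
        x i.succ ^ ((e : ℕ) + 1) - x i.castSucc ^ ((e : ℕ) + 1)).det
      = Vand10 x := by
  classical
  set M : Matrix (Fin (N + 1)) (Fin (N + 1)) ℝ := (Matrix.vandermonde x).transpose with hM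
  set T : Matrix (Fin (N + 1)) (Fin (N + 1)) ℝ :=
    Matrix.of fun j k => if j = k then (1 : ℝ)
      else if (j : ℕ) + 1 = (k : ℕ) then -1 else 0 with hT
  have hTdet : T.det = 1 := by
    have htri : T.BlockTriangular id := by
      intro j k hkj
      simp only [hT, Matrix.of_apply, id] at *
      rw [if_neg, if_neg]
      · omega
      · exact fun h => absurd h (by omega)
    rw [Matrix.det_of_upperTriangular htri]
    simp [hT, Matrix.diag]
  have hP0 : ∀ i : Fin (N + 1), (M * T) i 0 = x 0 ^ (i : ℕ) := by
    intro i
    rw [Matrix.mul_apply, Finset.sum_eq_single 0]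
    · simp [hM, hT, Matrix.vandermonde]
    · intro j _ hj
      have h1 : (j : ℕ) + 1 ≠ ((0 : Fin (N + 1)) : ℕ) := by simp
      simp [hM, hT, hj, h1]
    · simp
  have hP1 : ∀ (i : Fin (N + 1)) (k' : Fin N),
      (M * T) i (Fin.succ k')
        = x (Fin.succ k') ^ (i : ℕ) - x (Fin.castSucc k') ^ (i : ℕ) := by
    intro i k'
    have hcs : (Fin.castSucc k') ≠ (Fin.succ k') := (Fin.castSucc_lt_succ : k'.castSucc < k'.succ).ne
    rw [Matrix.mul_apply]
    have hcs' : (Fin.succ k') ≠ (Fin.castSucc k') := Ne.symm hcs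
    have hterm : ∀ j : Fin (N + 1), M i j * T j (Fin.succ k')
        = (if j = Fin.succ k' then x j ^ (i : ℕ) else 0)
          + (if j = Fin.castSucc k' then -(x j ^ (i : ℕ)) else 0) := by
      intro j
      have hMij : M i j = x j ^ (i : ℕ) := by simp [hM, Matrix.vandermonde]
      simp only [hT, Matrix.of_apply, hMij]
      by_cases h1 : j = Fin.succ k'
      · subst h1
        simp [hcs']
      · by_cases h2 : j = Fin.castSucc k'
        · subst h2
          simp [hcs, Fin.coe_castSucc, Fin.val_succ]
        · have h3 : (j : ℕ) ≠ (k' : ℕ) := by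
            intro h
            apply h2
            apply Fin.ext
            have hc : ((Fin.castSucc k' : Fin (N + 1)) : ℕ) = (k' : ℕ) :=
              Fin.coe_castSucc k'
            omega
          simp [h1, h2, h3, Fin.val_succ]
    simp_rw [hterm]
    rw [Finset.sum_add_distrib, Finset.sum_ite_eq', Finset.sum_ite_eq']
    simp only [Finset.mem_univ, if_true]
    ring
  have hMT : M.det = (M * T).det := by rw [Matrix.det_mul, hTdet, mul_one]
  have hexp : (M * T).det
      = (Matrix.of fun e i : Fin N =>
          x i.succ ^ ((e : ℕ) + 1) - x i.castSucc ^ ((e : ℕ) + 1)).det := by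
    rw [Matrix.det_succ_row_zero, Finset.sum_eq_single 0]
    · have h00 : (M * T) 0 0 = 1 := by rw [hP0]; simp
      have hsub : (M * T).submatrix Fin.succ ((0 : Fin (N + 1)).succAbove)
          = Matrix.of fun e i : Fin N =>
              x i.succ ^ ((e : ℕ) + 1) - x i.castSucc ^ ((e : ℕ) + 1) := by
        ext e i
        rw [Fin.succAbove_zero]
        simp only [Matrix.submatrix_apply, hP1, Matrix.of_apply, Fin.val_succ]
      rw [h00, hsub]
      simp
    · intro j _ hj
      obtain ⟨k', rfl⟩ := Fin.eq_succ_of_ne_zero hj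
      have : (M * T) 0 (Fin.succ k') = 0 := by
        rw [hP1]; simp
      rw [this]; ring
    · simp
  have hV : M.det = Vand10 x := by
    rw [hM, Matrix.det_transpose, Matrix.det_vandermonde, Vand10]
  rw [← hexp, ← hMT, hV]

end Stmt10Aux

/-- `∫_{W^{N,N+1}(x)} Δ_N(y) dy = Δ_{N+1}(x)/N!`, i.e. the kernel `L_N^{N+1}(x,·)`
has total mass 1. -/
theorem stmt10 (N : ℕ) (x : Fin (N + 1) → ℝ) (hx : StrictMono x) :
    (∫ y : Fin N → ℝ, Set.indicator (W110 x) (fun y => Vand10 y) y)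
      = Vand10 x / (Nat.factorial N : ℝ) := by
  classical
  have hle : ∀ k : Fin N, x k.castSucc ≤ x k.succ :=
    fun k => (hx (Fin.castSucc_lt_succ : k.castSucc < k.succ)).le
  set S : Set (Fin N → ℝ) :=
    Set.univ.pi (fun k : Fin N => Set.Icc (x k.castSucc) (x k.succ)) with hS
  have hbox : W110 x = S := by
    ext y
    simp [W110, hS, Set.mem_pi, Set.mem_Icc, Pi.le_def, forall_and]
  have hpt : ∀ y : Fin N → ℝ,
      Set.indicator (W110 x) (fun y => Vand10 y) y
        = ∑ σ : Equiv.Perm (Fin N), ((Equiv.Perm.sign σ : ℤ) : ℝ) *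
            ∏ i, Set.indicator (Set.Icc (x i.castSucc) (x i.succ))
              (fun t => t ^ ((σ i : Fin N) : ℕ)) (y i) := by
    intro y
    rw [hbox]
    have step1 : Set.indicator S (fun y => Vand10 y) y
        = ∑ σ : Equiv.Perm (Fin N), ((Equiv.Perm.sign σ : ℤ) : ℝ) *
            Set.indicator S (fun y => ∏ i, y i ^ ((σ i : Fin N) : ℕ)) y := by
      by_cases h : y ∈ S
      · simp only [Set.indicator_of_mem h]
        exact Stmt10Aux.vand_eq_sum y
      · simp [Set.indicator_of_notMem h]
    rw [step1]
    refine Finset.sum_congr rfl fun σ _ => ?_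
    rw [hS]
    congr 1
    exact Stmt10Aux.indicator_pi_prod _ (fun i t => t ^ ((σ i : Fin N) : ℕ)) y
  have hInt : ∀ σ : Equiv.Perm (Fin N),
      Integrable (fun y : Fin N → ℝ => ((Equiv.Perm.sign σ : ℤ) : ℝ) *
        ∏ i, Set.indicator (Set.Icc (x i.castSucc) (x i.succ))
          (fun t => t ^ ((σ i : Fin N) : ℕ)) (y i)) := by
    intro σ
    apply Integrable.const_mul
    have heq : (fun y : Fin N → ℝ =>
        ∏ i, Set.indicator (Set.Icc (x i.castSucc) (x i.succ))
          (fun t => t ^ ((σ i : Fin N) : ℕ)) (y i))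
        = Set.indicator S (fun y => ∏ i, y i ^ ((σ i : Fin N) : ℕ)) :=
      funext fun y =>
        (Stmt10Aux.indicator_pi_prod _ (fun i t => t ^ ((σ i : Fin N) : ℕ)) y).symm
    rw [heq]
    have hc : IsCompact S := isCompact_univ_pi fun i => isCompact_Icc
    have hm : MeasurableSet S := MeasurableSet.univ_pi fun i => measurableSet_Icc
    have hcont : Continuous (fun y : Fin N → ℝ => ∏ i, y i ^ ((σ i : Fin N) : ℕ)) :=
      continuous_finset_prod _ fun i _ => (continuous_apply i).pow _
    exact (hcont.continuousOn.integrableOn_compact hc).integrable_indicator hm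
  calc (∫ y : Fin N → ℝ, Set.indicator (W110 x) (fun y => Vand10 y) y)
      = ∫ y : Fin N → ℝ, ∑ σ : Equiv.Perm (Fin N), ((Equiv.Perm.sign σ : ℤ) : ℝ) *
          ∏ i, Set.indicator (Set.Icc (x i.castSucc) (x i.succ))
            (fun t => t ^ ((σ i : Fin N) : ℕ)) (y i) := by
        exact congrArg _ (funext hpt)
    _ = ∑ σ : Equiv.Perm (Fin N), ((Equiv.Perm.sign σ : ℤ) : ℝ) *
          ∏ i, ∫ t : ℝ, Set.indicator (Set.Icc (x i.castSucc) (x i.succ))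
            (fun t => t ^ ((σ i : Fin N) : ℕ)) t := by
        rw [integral_finset_sum _ fun σ _ => hInt σ]
        refine Finset.sum_congr rfl fun σ _ => ?_
        rw [integral_const_mul, MeasureTheory.volume_pi,
          MeasureTheory.integral_fintype_prod_eq_prod (ι := Fin N) (μ := fun _ => volume)
            (fun i t => Set.indicator (Set.Icc (x i.castSucc) (x i.succ))
              (fun t => t ^ ((σ i : Fin N) : ℕ)) t)]
    _ = ∑ σ : Equiv.Perm (Fin N), ((Equiv.Perm.sign σ : ℤ) : ℝ) *
          ∏ i, (Matrix.of fun e i : Fin N =>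
            (((e : ℕ) : ℝ) + 1)⁻¹ *
              (x i.succ ^ ((e : ℕ) + 1) - x i.castSucc ^ ((e : ℕ) + 1))) (σ i) i := by
        refine Finset.sum_congr rfl fun σ _ => ?_
        congr 1
        refine Finset.prod_congr rfl fun i _ => ?_
        rw [Stmt10Aux.integral_indicator_pow _ _ (hle i)]
        simp [Matrix.of_apply, div_eq_inv_mul]
    _ = (Matrix.of fun e i : Fin N =>
          (((e : ℕ) : ℝ) + 1)⁻¹ *
            (x i.succ ^ ((e : ℕ) + 1) - x i.castSucc ^ ((e : ℕ) + 1))).det := by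
        rw [Matrix.det_apply]
        refine Finset.sum_congr rfl fun σ _ => ?_
        simp [Units.smul_def, zsmul_eq_mul]
    _ = Vand10 x / (Nat.factorial N : ℝ) := by
        rw [Matrix.det_mul_column (fun e : Fin N => (((e : ℕ) : ℝ) + 1)⁻¹) (fun (e i : Fin N) =>
              x i.succ ^ ((e : ℕ) + 1) - x i.castSucc ^ ((e : ℕ) + 1))]
        rw [show (fun (e i : Fin N) =>
              x i.succ ^ ((e : ℕ) + 1) - x i.castSucc ^ ((e : ℕ) + 1))
            = (Matrix.of fun (e i : Fin N) =>
              x i.succ ^ ((e : ℕ) + 1) - x i.castSucc ^ ((e : ℕ) + 1)) from rfl,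
          Stmt10Aux.det_diff]
        have hprod : (∏ e : Fin N, (((e : ℕ) : ℝ) + 1)⁻¹)
            = ((Nat.factorial N : ℝ))⁻¹ := by
          rw [Finset.prod_inv_distrib]
          congr 1
          rw [Fin.prod_univ_eq_prod_range (fun i => ((i : ℝ) + 1))]
          norm_cast
          exact Finset.prod_range_add_one_eq_factorial N
        rw [hprod, inv_mul_eq_div]
end
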